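/- Case (VI)(i): Let η be a character of Γ with η|_Λ = ξ and let c ∈ ℂ, c ≠ 0. The operators on L(η, c) defined by ρ(h)·f_i = η(h)·χ₁(h)^i·f_i, X·f_i = f_{i+1}, Y·f_i = c_i·f_{i−1} (indices modulo r) form a case-VI representation if and only if c₀·c₁·⋯·c_{r−1} = 1; and when this holds, (L(η, c), ρ, X, Y) is irreducible. -/

import Mathlib

noncomputable section

/-- `(V, ρ, X, Y)` is a representation of the common part of the rank-2 algebra `A(ξ)`:
`ρ` is a group homomorphism (recorded via multiplicativity and unitality),
`ρ(h)∘X = χ₁(h)·(X∘ρ(h))` and `ρ(h)∘Y = χ₂(h)·(Y∘ρ(h))` for all `h ∈ Γ`, and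
`ρ(g) = ξ(g)·id` for all `g ∈ Λ`. -/
def IsRep {Γ : Type*} [CommGroup Γ] (χ₁ χ₂ : Γ →* ℂˣ) (Λ : Subgroup Γ) (ξ : ↥Λ →* ℂˣ)
    {V : Type*} [AddCommGroup V] [Module ℂ V]
    (ρ : Γ → Module.End ℂ V) (X Y : Module.End ℂ V) : Prop :=
  (∀ a b : Γ, ρ (a * b) = ρ a * ρ b) ∧ ρ 1 = 1 ∧
  (∀ h : Γ, ρ h * X = (χ₁ h : ℂ) • (X * ρ h)) ∧
  (∀ h : Γ, ρ h * Y = (χ₂ h : ℂ) • (Y * ρ h)) ∧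
  ∀ g : Λ, ρ (g : Γ) = (ξ g : ℂ) • (1 : Module.End ℂ V)

/-- A subspace `W` is stable under `X`, `Y` and all `ρ(h)`. -/
def Stable2 {Γ : Type*} {V : Type*} [AddCommGroup V] [Module ℂ V]
    (ρ : Γ → Module.End ℂ V) (X Y : Module.End ℂ V) (W : Submodule ℂ V) : Prop :=
  (∀ v ∈ W, X v ∈ W) ∧ (∀ v ∈ W, Y v ∈ W) ∧ ∀ h : Γ, ∀ v ∈ W, ρ h v ∈ W

/-- Irreducibility: `V ≠ 0` and the only subspaces stable under `X`, `Y` and all `ρ(h)`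
are `0` and `V`. -/
def Irred2 {Γ : Type*} {V : Type*} [AddCommGroup V] [Module ℂ V]
    (ρ : Γ → Module.End ℂ V) (X Y : Module.End ℂ V) : Prop :=
  (∃ v : V, v ≠ 0) ∧ ∀ W : Submodule ℂ V, Stable2 ρ X Y W → W = ⊥ ∨ W = ⊤

/-- The sequence `c_i` defined by `c₀ = c` and
`c_i = q·(c_{i−1} + ν − ν·q^{2(i−1)}·γ)` for `i ≥ 1`. -/
def cseq (q ν γ c : ℂ) : ℕ → ℂ
  | 0 => c
  | i + 1 => q * (cseq q ν γ c i + ν - ν * q ^ (2 * i) * γ)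

/-- `(V, ρ, X, Y)` is a case-VI representation: a representation with in addition
`X^r = id`, `Y^r = id` and `X∘Y = q⁻¹·(Y∘X) + ν·(ρ(g₁g₂) − id)`, where `q = χ₁(g₁)`. -/
def IsRepVI {Γ : Type*} [CommGroup Γ] (g₁ g₂ : Γ) (χ₁ χ₂ : Γ →* ℂˣ) (ν : ℂ)
    (Λ : Subgroup Γ) (ξ : ↥Λ →* ℂˣ) (r : ℕ)
    {V : Type*} [AddCommGroup V] [Module ℂ V]
    (ρ : Γ → Module.End ℂ V) (X Y : Module.End ℂ V) : Prop :=
  IsRep χ₁ χ₂ Λ ξ ρ X Y ∧ X ^ r = 1 ∧ Y ^ r = 1 ∧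
    X * Y = (((χ₁ g₁ : ℂˣ) : ℂ))⁻¹ • (Y * X) + ν • (ρ (g₁ * g₂) - 1)

/-- The action of `h ∈ Γ` on `L(η, c)`, with `ρ(h)·f_i = η(h)·χ₁(h)^i·f_i` on the basis
`(f_i)_{i ∈ ℤ/rℤ}` of `ℤ/rℤ → ℂ`. -/
def wRho (r : ℕ) {Γ : Type*} [CommGroup Γ] (χ₁ η : Γ →* ℂˣ) (h : Γ) :
    Module.End ℂ (ZMod r → ℂ) where
  toFun v := fun i => (η h : ℂ) * (χ₁ h : ℂ) ^ i.val * v i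
  map_add' v w := by funext i; simp [mul_add]
  map_smul' a v := by funext i; simp [smul_eq_mul]; ring

/-- The operator `X` on `L(η, c)`, with `X·f_i = f_{i+1}` (indices modulo `r`). -/
def wX (r : ℕ) : Module.End ℂ (ZMod r → ℂ) where
  toFun v := fun i => v (i - 1)
  map_add' _ _ := rfl
  map_smul' _ _ := rfl

/-- The operator `Y` on `L(η, c)`, with `Y·f_i = c_i·f_{i−1}` (indices modulo `r`,
the index of `c` being read off via the canonical representative in `{0, …, r−1}`). -/
def wY (r : ℕ) (cs : ℕ → ℂ) : Module.End ℂ (ZMod r → ℂ) where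
  toFun v := fun j => cs ((j + 1 : ZMod r).val) * v (j + 1)
  map_add' v w := by funext j; simp [mul_add]
  map_smul' a v := by funext j; simp [smul_eq_mul]; ring

lemma pow_mod_eq' {u : ℂ} {r : ℕ} (h : u ^ r = 1) (a : ℕ) : u ^ a = u ^ (a % r) := by
  conv_lhs => rw [← Nat.div_add_mod a r, pow_add, pow_mul, h, one_pow, one_mul]

lemma cseq_closed (q ν γ c : ℂ) (i : ℕ) :
    cseq q ν γ c i = q ^ i * c + ν * ∑ k ∈ Finset.range i, (q ^ (i - k) - γ * q ^ (i + k)) := by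
  induction i with
  | zero => simp [cseq]
  | succ i ih =>
    rw [cseq, ih, Finset.sum_range_succ]
    have h1 : ∑ k ∈ Finset.range i, (q ^ (i + 1 - k) - γ * q ^ (i + 1 + k)) =
        q * ∑ k ∈ Finset.range i, (q ^ (i - k) - γ * q ^ (i + k)) := by
      rw [Finset.mul_sum]
      refine Finset.sum_congr rfl fun k hk => ?_
      have hk' : k < i := Finset.mem_range.mp hk
      have : i + 1 - k = (i - k) + 1 := by omega
      rw [this]; ring
    rw [h1]
    have : i + 1 - i = 1 := by omega
    rw [this]
    ring

lemma cseq_r {q : ℂ} {r : ℕ} (hq1 : q ^ r = 1)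
    (hs : ∑ k ∈ Finset.range r, q ^ k = 0) (ν γ c : ℂ) : cseq q ν γ c r = c := by
  rw [cseq_closed]
  have h2 : ∑ k ∈ Finset.range r, (q ^ (r - k) - γ * q ^ (r + k)) =
      (∑ k ∈ Finset.range r, q ^ (r - k)) - γ * ∑ k ∈ Finset.range r, q ^ (r + k) := by
    rw [Finset.mul_sum, Finset.sum_sub_distrib]
  have h3 : ∑ k ∈ Finset.range r, q ^ (r - k) = 0 := by
    rw [← Finset.sum_range_reflect (fun k => q ^ (r - k)) r]
    have : ∀ j ∈ Finset.range r, q ^ (r - (r - 1 - j)) = q * q ^ j := by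
      intro j hj
      have : r - (r - 1 - j) = j + 1 := by
        have := Finset.mem_range.mp hj; omega
      rw [this, pow_succ]; ring
    rw [Finset.sum_congr rfl this, ← Finset.mul_sum, hs, mul_zero]
  have h4 : ∑ k ∈ Finset.range r, q ^ (r + k) = 0 := by
    have : ∀ k ∈ Finset.range r, q ^ (r + k) = q ^ k := by
      intro k _; rw [pow_add, hq1, one_mul]
    rw [Finset.sum_congr rfl this, hs]
  rw [h2, h3, h4, hq1]
  ring

lemma wX_apply (r : ℕ) (v : ZMod r → ℂ) (i : ZMod r) : wX r v i = v (i - 1) := rfl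
lemma wY_apply (r : ℕ) (cs : ℕ → ℂ) (v : ZMod r → ℂ) (j : ZMod r) :
    wY r cs v j = cs ((j + 1 : ZMod r).val) * v (j + 1) := rfl
lemma wRho_apply (r : ℕ) {Γ : Type*} [CommGroup Γ] (χ₁ η : Γ →* ℂˣ) (h : Γ)
    (v : ZMod r → ℂ) (i : ZMod r) :
    wRho r χ₁ η h v i = (η h : ℂ) * (χ₁ h : ℂ) ^ i.val * v i := rfl

lemma wX_pow_apply (r k : ℕ) (v : ZMod r → ℂ) (i : ZMod r) :
    ((wX r) ^ k) v i = v (i - k) := by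
  induction k generalizing v i with
  | zero => simp
  | succ k ih =>
    rw [pow_succ, Module.End.mul_apply, ih, wX_apply]
    congr 1
    push_cast
    ring

lemma wY_pow_apply (r k : ℕ) (cs : ℕ → ℂ) (v : ZMod r → ℂ) (j : ZMod r) :
    ((wY r cs) ^ k) v j =
      (∏ t ∈ Finset.range k, cs ((j + 1 + (t : ZMod r)).val)) * v (j + k) := by
  induction k generalizing v j with
  | zero => simp
  | succ k ih =>
    rw [pow_succ, Module.End.mul_apply, ih, wY_apply, Finset.prod_range_succ]
    have e1 : j + (1 : ZMod r) + (k : ZMod r) = j + (k : ZMod r) + 1 := by ring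
    have e2 : j + ((k : ℕ) + 1 : ℕ) = j + (k : ZMod r) + 1 := by push_cast; ring
    rw [e1, e2]
    ring

lemma prod_reindex (r : ℕ) [NeZero r] (cs : ℕ → ℂ) (j0 : ZMod r) :
    ∏ t ∈ Finset.range r, cs ((j0 + (t : ZMod r)).val) = ∏ i ∈ Finset.range r, cs i := by
  have h1 : ∀ f : ZMod r → ℂ, ∏ t ∈ Finset.range r, f ((t : ZMod r)) = ∏ x : ZMod r, f x := by
    intro f
    refine Finset.prod_bij (t := (Finset.univ : Finset (ZMod r))) (g := f)
      (fun t _ => (t : ZMod r)) ?_ ?_ ?_ ?_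
    · intro a _; exact Finset.mem_univ _
    · intro a ha b hb hab
      have ha' := Finset.mem_range.mp ha
      have hb' := Finset.mem_range.mp hb
      have := congrArg ZMod.val hab
      rwa [ZMod.val_cast_of_lt ha', ZMod.val_cast_of_lt hb'] at this
    · intro x _
      refine ⟨x.val, Finset.mem_range.mpr (ZMod.val_lt x), ?_⟩
      simp [ZMod.natCast_val, ZMod.cast_id]
    · intro a _; rfl
  have h2 : ∏ i ∈ Finset.range r, cs i = ∏ i ∈ Finset.range r, cs ((i : ZMod r)).val := by
    refine Finset.prod_congr rfl fun i hi => ?_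
    rw [ZMod.val_cast_of_lt (Finset.mem_range.mp hi)]
  rw [h1 (fun x => cs ((j0 + x).val)), h2, h1 (fun x => cs x.val)]
  exact Fintype.prod_equiv (Equiv.addLeft j0) _ _ (fun x => by simp)

/-- Case (VI)(i): for a character `η` of `Γ` with `η|_Λ = ξ` and `c ≠ 0`, the operators
`ρ(h)·f_i = η(h)·χ₁(h)^i·f_i`, `X·f_i = f_{i+1}`, `Y·f_i = c_i·f_{i−1}` on `L(η, c)`
form a case-VI representation if and only if `c₀·c₁·⋯·c_{r−1} = 1`; and when this holds,
the representation is irreducible. Here `c_i = cseq q ν (η(g₁g₂)) c i`. -/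
theorem caseVI_construction {Γ : Type*} [CommGroup Γ] [Fintype Γ] (g₁ g₂ : Γ)
    (χ₁ χ₂ : Γ →* ℂˣ) (hχ₂ : χ₂ = χ₁⁻¹) (h12 : χ₁ g₂ * χ₂ g₁ = 1)
    (r : ℕ) (hr : 1 < r) (hord : orderOf χ₁ = r)
    (hq : IsPrimitiveRoot ((χ₁ g₁ : ℂˣ) : ℂ) r)
    (ν : ℂ) (hν : ν ≠ 0)
    (Λ : Subgroup Γ) (hΛ : ∀ g : Γ, g ∈ Λ ↔ (χ₁ g = 1 ∧ χ₂ g = 1)) (ξ : ↥Λ →* ℂˣ)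
    (η : Γ →* ℂˣ) (hη : ∀ g : Λ, η (g : Γ) = ξ g) (c : ℂ) (hc : c ≠ 0) :
    (IsRepVI g₁ g₂ χ₁ χ₂ ν Λ ξ r (wRho r χ₁ η) (wX r)
        (wY r (cseq ((χ₁ g₁ : ℂˣ) : ℂ) ν ((η (g₁ * g₂) : ℂˣ) : ℂ) c)) ↔
      ∏ i ∈ Finset.range r, cseq ((χ₁ g₁ : ℂˣ) : ℂ) ν ((η (g₁ * g₂) : ℂˣ) : ℂ) c i = 1) ∧
    ((∏ i ∈ Finset.range r, cseq ((χ₁ g₁ : ℂˣ) : ℂ) ν ((η (g₁ * g₂) : ℂˣ) : ℂ) c i = 1) →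
      Irred2 (wRho r χ₁ η) (wX r)
        (wY r (cseq ((χ₁ g₁ : ℂˣ) : ℂ) ν ((η (g₁ * g₂) : ℂˣ) : ℂ) c))) := by
  haveI : NeZero r := ⟨by omega⟩
  haveI : Fact (1 < r) := ⟨hr⟩
  set q : ℂ := ((χ₁ g₁ : ℂˣ) : ℂ) with hqdef
  set γ : ℂ := ((η (g₁ * g₂) : ℂˣ) : ℂ) with hγdef
  set cs : ℕ → ℂ := cseq q ν γ c with hcsdef
  -- basic facts
  have hq1 : q ^ r = 1 := hq.pow_eq_one
  have hqne : q ≠ 0 := by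
    intro h
    rw [h, zero_pow (by omega : r ≠ 0)] at hq1
    exact zero_ne_one hq1
  have hsum : ∑ k ∈ Finset.range r, q ^ k = 0 := hq.geom_sum_eq_zero hr
  have hcsr : cs r = cs 0 := by
    rw [hcsdef, cseq_r hq1 hsum]; rfl
  have hχr : ∀ h : Γ, ((χ₁ h : ℂˣ) : ℂ) ^ r = 1 := by
    intro h
    have h1 : χ₁ ^ r = 1 := by rw [← hord]; exact pow_orderOf_eq_one χ₁
    have h2 : (χ₁ h) ^ r = 1 := by
      have := congrArg (fun f : Γ →* ℂˣ => f h) h1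
      simpa using this
    calc ((χ₁ h : ℂˣ) : ℂ) ^ r = (((χ₁ h) ^ r : ℂˣ) : ℂ) := by push_cast; ring
    _ = 1 := by rw [h2]; rfl
  have hvadd : ∀ i : ZMod r, ((i + 1 : ZMod r)).val = (i.val + 1) % r := by
    intro i; rw [ZMod.val_add, ZMod.val_one]
  have cs_shift : ∀ i : ZMod r, cs ((i + 1 : ZMod r)).val = cs (i.val + 1) := by
    intro i
    rw [hvadd]
    rcases lt_or_ge (i.val + 1) r with h | h
    · rw [Nat.mod_eq_of_lt h]
    · have hv := ZMod.val_lt i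
      have : i.val + 1 = r := by omega
      rw [this, Nat.mod_self]
      exact hcsr.symm
  have hχ12 : ((χ₁ (g₁ * g₂) : ℂˣ) : ℂ) = q ^ 2 := by
    have h1 : χ₂ g₁ = (χ₁ g₁)⁻¹ := by rw [hχ₂]; rfl
    have h2 : χ₁ g₂ = χ₁ g₁ := by
      rw [h1] at h12
      exact mul_inv_eq_one.mp h12
    rw [map_mul, h2]
    push_cast
    ring
  constructor
  · constructor
    · -- IsRepVI → product = 1
      rintro ⟨-, -, hYr, -⟩
      have h1 := congrFun (DFunLike.congr_fun hYr (fun _ => (1 : ℂ))) 0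
      rw [wY_pow_apply] at h1
      simp only [Module.End.one_apply, mul_one, zero_add] at h1
      rwa [prod_reindex r cs 1] at h1
    · -- product = 1 → IsRepVI
      intro hP
      refine ⟨⟨?_, ?_, ?_, ?_, ?_⟩, ?_, ?_, ?_⟩
      · -- multiplicativity
        intro a b
        refine LinearMap.ext fun v => funext fun i => ?_
        rw [Module.End.mul_apply, wRho_apply, wRho_apply, wRho_apply, map_mul, map_mul]
        push_cast
        ring
      · -- identity
        refine LinearMap.ext fun v => funext fun i => ?_
        rw [wRho_apply, Module.End.one_apply, map_one, map_one]
        push_cast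
        ring
      · -- ρ h * X = χ₁ h • (X * ρ h)
        intro h
        refine LinearMap.ext fun v => funext fun i => ?_
        rw [Module.End.mul_apply, LinearMap.smul_apply, Pi.smul_apply, Module.End.mul_apply,
          wRho_apply, wX_apply, wX_apply, wRho_apply, smul_eq_mul]
        set u : ℂ := ((χ₁ h : ℂˣ) : ℂ) with hu
        have hur : u ^ r = 1 := hχr h
        have e : u ^ i.val = u ^ ((i - 1).val + 1) := by
          rw [pow_mod_eq' hur ((i - 1).val + 1), ← hvadd (i - 1)]
          congr 2
          ring
        rw [e, pow_succ]
        ring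
      · -- ρ h * Y = χ₂ h • (Y * ρ h)
        intro h
        refine LinearMap.ext fun v => funext fun j => ?_
        rw [Module.End.mul_apply, LinearMap.smul_apply, Pi.smul_apply, Module.End.mul_apply,
          wRho_apply, wY_apply, wY_apply, wRho_apply, smul_eq_mul]
        set u : ℂ := ((χ₁ h : ℂˣ) : ℂ) with hu
        have hur : u ^ r = 1 := hχr h
        have hune : u ≠ 0 := by
          intro h0
          rw [h0, zero_pow (by omega : r ≠ 0)] at hur
          exact zero_ne_one hur
        have hχ₂h : ((χ₂ h : ℂˣ) : ℂ) = u⁻¹ := by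
          rw [hχ₂]
          show (((χ₁ h)⁻¹ : ℂˣ) : ℂ) = u⁻¹
          exact Units.val_inv_eq_inv_val _
        have e : u ^ ((j + 1 : ZMod r)).val = u ^ (j.val + 1) := by
          rw [hvadd, ← pow_mod_eq' hur]
        rw [hχ₂h, e, pow_succ]
        field_simp
      · -- Λ acts by ξ
        intro g
        refine LinearMap.ext fun v => funext fun i => ?_
        rw [wRho_apply, LinearMap.smul_apply, Module.End.one_apply, Pi.smul_apply, smul_eq_mul]
        have h1 : χ₁ (g : Γ) = 1 := ((hΛ g).mp g.2).1
        rw [hη g, h1]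
        push_cast
        ring
      · -- X ^ r = 1
        refine LinearMap.ext fun v => funext fun i => ?_
        rw [wX_pow_apply, Module.End.one_apply, ZMod.natCast_self, sub_zero]
      · -- Y ^ r = 1
        refine LinearMap.ext fun v => funext fun j => ?_
        rw [wY_pow_apply, Module.End.one_apply, prod_reindex r cs (j + 1), hP,
          ZMod.natCast_self, add_zero, one_mul]
      · -- commutation relation
        refine LinearMap.ext fun v => funext fun i => ?_
        simp only [Module.End.mul_apply, LinearMap.add_apply, LinearMap.smul_apply,
          LinearMap.sub_apply, Module.End.one_apply, Pi.add_apply, Pi.smul_apply, Pi.sub_apply,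
          smul_eq_mul, wX_apply, wY_apply, wRho_apply]
        rw [hχ12]
        have hstep : cs (i.val + 1) = q * (cs i.val + ν - ν * q ^ (2 * i.val) * γ) := by
          rw [hcsdef]; rfl
        have e1 : i - 1 + 1 = i := by ring
        have e2 : i + 1 - 1 = i := by ring
        rw [e1, e2, cs_shift i, hstep, ← pow_mul]
        field_simp
        have hγmul : γ = ((η g₁ : ℂˣ) : ℂ) * ((η g₂ : ℂˣ) : ℂ) := by
          rw [hγdef, map_mul]; push_cast; ring
        rw [← hqdef, ← hγdef]
        rw [hγmul]
        ring
  · -- irreducibility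
    intro hP
    constructor
    · refine ⟨Pi.single 0 1, fun h => ?_⟩
      have h0 := congrFun h 0
      rw [Pi.single_eq_same, Pi.zero_apply] at h0
      exact one_ne_zero h0
    · intro W hW
      by_cases hbot : W = ⊥
      · exact Or.inl hbot
      · right
        obtain ⟨w, hwW, hw0⟩ := Submodule.exists_mem_ne_zero_of_ne_bot hbot
        -- diagonal entries of ρ(g₁)
        set d : ZMod r → ℂ := fun k => ((η g₁ : ℂˣ) : ℂ) * q ^ k.val with hd
        have dinj : ∀ i j : ZMod r, d i = d j → i = j := by
          intro i j hij
          have hη0 : ((η g₁ : ℂˣ) : ℂ) ≠ 0 := Units.ne_zero _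
          have hij' : ((η g₁ : ℂˣ) : ℂ) * q ^ i.val = ((η g₁ : ℂˣ) : ℂ) * q ^ j.val := hij
          have h1 : q ^ i.val = q ^ j.val := mul_left_cancel₀ hη0 hij'
          have h2 : i.val = j.val := hq.pow_inj (ZMod.val_lt i) (ZMod.val_lt j) h1
          have := congrArg (fun n : ℕ => (n : ZMod r)) h2
          simpa [ZMod.natCast_val, ZMod.cast_id] using this
        have key : ∀ n : ℕ, ∀ w : ZMod r → ℂ, w ∈ W → w ≠ 0 →
            (Finset.univ.filter fun k => w k ≠ 0).card = n →
            ∃ i, Pi.single i (1 : ℂ) ∈ W := by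
          intro n
          induction n using Nat.strong_induction_on with
          | _ n ih =>
            intro w hwW hw0 hcard
            obtain ⟨i0, hi0⟩ : ∃ i0, w i0 ≠ 0 := by
              by_contra hcon
              push_neg at hcon
              exact hw0 (funext fun k => hcon k)
            by_cases hs : ∀ k, w k ≠ 0 → k = i0
            · refine ⟨i0, ?_⟩
              have hw : Pi.single i0 (1 : ℂ) = (w i0)⁻¹ • w := by
                funext k
                by_cases hk : k = i0
                · subst hk
                  rw [Pi.single_eq_same, Pi.smul_apply, smul_eq_mul, inv_mul_cancel₀ hi0]
                · rw [Pi.single_eq_of_ne hk, Pi.smul_apply, smul_eq_mul]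
                  rcases eq_or_ne (w k) 0 with h | h
                  · rw [h, mul_zero]
                  · exact absurd (hs k h) hk
              rw [hw]
              exact Submodule.smul_mem _ _ hwW
            · push_neg at hs
              obtain ⟨j, hj0, hji⟩ := hs
              set w' : ZMod r → ℂ := fun k => (d k - d j) * w k with hw'
              have hw'mem : w' ∈ W := by
                have h1 : wRho r χ₁ η g₁ w ∈ W := hW.2.2 g₁ w hwW
                have h2 : wRho r χ₁ η g₁ w - d j • w ∈ W :=
                  Submodule.sub_mem _ h1 (Submodule.smul_mem _ _ hwW)
                have h3 : w' = wRho r χ₁ η g₁ w - d j • w := by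
                  funext k
                  rw [Pi.sub_apply, wRho_apply, Pi.smul_apply, smul_eq_mul, hw']
                  ring
                rw [h3]
                exact h2
              have hdij : d i0 - d j ≠ 0 :=
                sub_ne_zero.mpr fun h => hji ((dinj i0 j h).symm)
              have hw'i0 : w' i0 ≠ 0 := mul_ne_zero hdij hi0
              have hw'0 : w' ≠ 0 := fun h => hw'i0 (by rw [h]; rfl)
              have hsub : (Finset.univ.filter fun k => w' k ≠ 0) ⊂
                  (Finset.univ.filter fun k => w k ≠ 0) := by
                constructor
                · intro k hk
                  simp only [Finset.mem_filter, Finset.mem_univ, true_and] at hk ⊢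
                  intro hwk
                  exact hk (by rw [hw']; simp [hwk])
                · intro hsup
                  have hj_in : j ∈ Finset.univ.filter fun k => w k ≠ 0 := by
                    simp only [Finset.mem_filter, Finset.mem_univ, true_and]
                    exact hj0
                  have := hsup hj_in
                  simp only [Finset.mem_filter, Finset.mem_univ, true_and] at this
                  exact this (by rw [hw']; simp)
              exact ih _ (by rw [← hcard]; exact Finset.card_lt_card hsub) w' hw'mem hw'0 rfl
        obtain ⟨i, hi⟩ := key _ w hwW hw0 rfl
        have hXs : ∀ m : ℕ, Pi.single (i + (m : ZMod r)) (1 : ℂ) ∈ W := by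
          intro m
          induction m with
          | zero => simpa using hi
          | succ m ih =>
            have hmem := hW.1 _ ih
            have hx : wX r (Pi.single (i + (m : ZMod r)) (1 : ℂ)) =
                Pi.single (i + (m : ZMod r) + 1) (1 : ℂ) := by
              funext k
              rw [wX_apply, Pi.single_apply, Pi.single_apply]
              congr 1
              rw [eq_iff_iff]
              constructor
              · intro h; rw [← h]; ring
              · intro h; rw [h]; ring
            rw [hx] at hmem
            have : ((m + 1 : ℕ) : ZMod r) = (m : ZMod r) + 1 := by push_cast; ring
            rw [this, ← add_assoc]
            exact hmem
        have hall : ∀ j : ZMod r, Pi.single j (1 : ℂ) ∈ W := by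
          intro j
          have h1 := hXs (j - i).val
          have h2 : i + (((j - i).val : ℕ) : ZMod r) = j := by
            rw [ZMod.natCast_val, ZMod.cast_id]
            ring
          rwa [h2] at h1
        rw [eq_top_iff]
        intro v _
        have hv : v = ∑ k : ZMod r, v k • (Pi.single k (1 : ℂ) : ZMod r → ℂ) := by
          funext j
          rw [Fintype.sum_apply]
          simp [Pi.single_apply]
        rw [hv]
        exact Submodule.sum_mem _ fun k _ => Submodule.smul_mem _ _ (hall k)
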